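/- Let k = 2p+1 with an integer p ≥ 1 (so k ≥ 3 is odd), let μ₀ = √(1 − 2/k) ∈ (0,1), and let A : (0,1) → ℝ be the drift coefficient defined in the context. Then: (i) for every μ ∈ (μ₀, 1), A(μ) > 0; (ii) as μ → 0⁺ one has A(μ) = −( (2p+1)!/(2p+1) ) · μ / ( 2p · p! · (p−1)! · 2^{2p−1} ) + O(μ²); in particular there exists ε₀ > 0 such that A(μ) < 0 for all μ ∈ (0, ε₀). -/

import Mathlib

open Finset in
/-- The auxiliary function `f(k,μ)` appearing in the drift coefficients of the
linearized LoRA search-phase dynamics for a pure Hermite activation `He_k`. -/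
noncomputable def fAux (k : ℕ) (μ : ℝ) : ℝ :=
  ∑ m ∈ Finset.Icc 1 (k / 2),
    (1 + (k : ℝ) * (μ ^ 2 - 1) / (2 * (m : ℝ))) * μ ^ (2 * (k - 2 * m)) *
      (μ ^ 2 - 1) ^ (2 * m - 1) /
      (((k - 2 * m).factorial : ℝ) * (m.factorial : ℝ) * ((m - 1).factorial : ℝ) *
        (2 : ℝ) ^ (2 * m - 1))

/-- The rescaled drift coefficient `A(μ)` of the linearized dynamics. -/
noncomputable def Acoef (k : ℕ) (μ : ℝ) : ℝ :=
  -(μ ^ (k - 1) * (μ ^ k - 1) + ((k.factorial : ℝ) / (k : ℝ)) * μ⁻¹ * fAux k μ)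

/-- The rescaled drift coefficient `B(μ)` of the linearized dynamics. -/
noncomputable def Bcoef (k : ℕ) (μ : ℝ) : ℝ :=
  -(μ ^ (2 * k - 2) + ((k.factorial : ℝ) / (k : ℝ)) * (μ ^ 2)⁻¹ * fAux k μ)

/-- The characteristic escape-time prefactor `τ(μ)`. -/
noncomputable def tauCoef (k : ℕ) (μ : ℝ) : ℝ :=
  (-(Bcoef k μ) + Real.sqrt ((Bcoef k μ) ^ 2 + 4 * (Acoef k μ) ^ 2)) /
    (2 * (Acoef k μ) ^ 2)

noncomputable def gAux (p : ℕ) (μ : ℝ) : ℝ :=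
  -(μ ^ (2 * p - 1) * (μ ^ (2 * p + 1) - 1) +
    (((2 * p + 1).factorial : ℝ) / ((2 * p + 1 : ℕ) : ℝ)) *
      ∑ m ∈ Finset.Icc 1 p,
        (1 + ((2 * p + 1 : ℕ) : ℝ) * (μ ^ 2 - 1) / (2 * (m : ℝ))) *
          μ ^ (2 * (2 * p + 1 - 2 * m) - 2) * (μ ^ 2 - 1) ^ (2 * m - 1) /
          (((2 * p + 1 - 2 * m).factorial : ℝ) * (m.factorial : ℝ) * ((m - 1).factorial : ℝ) *
            (2 : ℝ) ^ (2 * m - 1)))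

lemma hdiv2 (p : ℕ) : (2 * p + 1) / 2 = p := by omega

lemma A_eq (p : ℕ) (hp : 1 ≤ p) (μ : ℝ) (hμ : μ ≠ 0) :
    Acoef (2 * p + 1) μ = μ * gAux p μ := by
  unfold Acoef fAux gAux
  rw [hdiv2]
  have hpow : μ ^ (2 * p + 1 - 1) = μ * μ ^ (2 * p - 1) := by
    rw [← pow_succ']
    congr 1
    omega
  have hsum : μ⁻¹ * (∑ m ∈ Finset.Icc 1 p,
        (1 + ((2 * p + 1 : ℕ) : ℝ) * (μ ^ 2 - 1) / (2 * (m : ℝ))) *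
          μ ^ (2 * (2 * p + 1 - 2 * m)) * (μ ^ 2 - 1) ^ (2 * m - 1) /
          (((2 * p + 1 - 2 * m).factorial : ℝ) * (m.factorial : ℝ) * ((m - 1).factorial : ℝ) *
            (2 : ℝ) ^ (2 * m - 1))) =
      μ * (∑ m ∈ Finset.Icc 1 p,
        (1 + ((2 * p + 1 : ℕ) : ℝ) * (μ ^ 2 - 1) / (2 * (m : ℝ))) *
          μ ^ (2 * (2 * p + 1 - 2 * m) - 2) * (μ ^ 2 - 1) ^ (2 * m - 1) /
          (((2 * p + 1 - 2 * m).factorial : ℝ) * (m.factorial : ℝ) * ((m - 1).factorial : ℝ) *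
            (2 : ℝ) ^ (2 * m - 1))) := by
    rw [Finset.mul_sum, Finset.mul_sum]
    refine Finset.sum_congr rfl fun m hm => ?_
    obtain ⟨hm1, hm2⟩ := Finset.mem_Icc.mp hm
    have hE : 2 * (2 * p + 1 - 2 * m) = (2 * (2 * p + 1 - 2 * m) - 2) + 2 := by omega
    conv_lhs => rw [hE]
    rw [pow_add]
    field_simp
  linear_combination (-(μ ^ (2 * p + 1) - 1)) * hpow +
    (-(((2 * p + 1).factorial : ℝ) / ((2 * p + 1 : ℕ) : ℝ))) * hsum

lemma gAux_diff (p : ℕ) : Differentiable ℝ (gAux p) := by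
  unfold gAux
  apply Differentiable.neg
  apply Differentiable.add
  · fun_prop
  · apply Differentiable.const_mul
    apply Differentiable.fun_sum
    intro m hm
    apply Differentiable.div_const
    fun_prop

lemma gAux_zero (p : ℕ) (hp : 1 ≤ p) :
    gAux p 0 = -((((2 * p + 1).factorial : ℝ) / (2 * (p : ℝ) + 1)) /
      (2 * (p : ℝ) * (p.factorial : ℝ) * ((p - 1).factorial : ℝ) * (2 : ℝ) ^ (2 * p - 1))) := by
  unfold gAux
  rw [Finset.sum_eq_single_of_mem p (by simp [hp])
    (fun m hm hne => by
      obtain ⟨hm1, hm2⟩ := Finset.mem_Icc.mp hm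
      have he : 2 * (2 * p + 1 - 2 * m) - 2 ≠ 0 := by omega
      rw [zero_pow he]
      ring)]
  have h1 : 2 * p + 1 - 2 * p = 1 := by omega
  have h3 : 2 * p - 1 ≠ 0 := by omega
  have h4 : Odd (2 * p - 1) := ⟨p - 1, by omega⟩
  rw [h1, zero_pow h3, zero_pow (by omega : 2 * p + 1 ≠ 0)]
  have h5 : ((0 : ℝ) ^ 2 - 1) ^ (2 * p - 1) = -1 := by
    norm_num
    exact h4.neg_one_pow
  rw [h5, (by norm_num : 2 * 1 - 2 = 0), pow_zero]
  have hkc : (((2 * p + 1 : ℕ)) : ℝ) = 2 * (p : ℝ) + 1 := by push_cast; ring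
  rw [hkc]
  have hp' : (0 : ℝ) < (p : ℝ) := by exact_mod_cast hp
  have hf1 : (0 : ℝ) < (p.factorial : ℝ) := by exact_mod_cast p.factorial_pos
  have hf2 : (0 : ℝ) < ((p - 1).factorial : ℝ) := by exact_mod_cast (p - 1).factorial_pos
  have h2p : (0 : ℝ) < (2 : ℝ) ^ (2 * p - 1) := by positivity
  simp only [Nat.factorial_one, Nat.cast_one]
  have e1 : (0:ℝ) ^ 2 - 1 = -1 := by norm_num
  rw [e1]
  have n1 : (2 * (p : ℝ) + 1) ≠ 0 := by positivity
  have n2 : ((p : ℝ)) ≠ 0 := ne_of_gt hp'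
  have n3 : (p.factorial : ℝ) ≠ 0 := ne_of_gt hf1
  have n4 : ((p - 1).factorial : ℝ) ≠ 0 := ne_of_gt hf2
  have n5 : ((2 : ℝ) ^ (2 * p - 1)) ≠ 0 := ne_of_gt h2p
  field_simp
  ring

/-- For an odd pure Hermite activation of degree `k = 2p+1 ≥ 3`:
(i) `A(μ) > 0` for all `μ ∈ (μ₀, 1)` with `μ₀ = √(1 − 2/k)`;
(ii) `A(μ) = −((2p+1)!/(2p+1))·μ/(2p·p!·(p−1)!·2^{2p−1}) + O(μ²)` as `μ → 0⁺`,
and in particular `A(μ) < 0` for all sufficiently small `μ > 0`. -/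
theorem stmt3 (p : ℕ) (hp : 1 ≤ p) :
    (∀ μ ∈ Set.Ioo (Real.sqrt (1 - 2 / (2 * (p : ℝ) + 1))) 1,
        0 < Acoef (2 * p + 1) μ) ∧
    (fun μ : ℝ => Acoef (2 * p + 1) μ +
        (((2 * p + 1).factorial : ℝ) / (2 * (p : ℝ) + 1)) * μ /
          (2 * (p : ℝ) * (p.factorial : ℝ) * ((p - 1).factorial : ℝ) *
            (2 : ℝ) ^ (2 * p - 1)))
      =O[nhdsWithin 0 (Set.Ioi 0)] (fun μ : ℝ => μ ^ 2) ∧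
    ∃ ε₀ > (0 : ℝ), ∀ μ ∈ Set.Ioo (0 : ℝ) ε₀, Acoef (2 * p + 1) μ < 0 := by
  have hp' : (0 : ℝ) < (p : ℝ) := by exact_mod_cast hp
  have hf1 : (0 : ℝ) < (p.factorial : ℝ) := by exact_mod_cast p.factorial_pos
  have hf2 : (0 : ℝ) < ((p - 1).factorial : ℝ) := by exact_mod_cast (p - 1).factorial_pos
  have hfk : (0 : ℝ) < (((2 * p + 1).factorial : ℕ) : ℝ) := by
    exact_mod_cast (2 * p + 1).factorial_pos
  have hC : (0 : ℝ) < (((2 * p + 1).factorial : ℝ) / (2 * (p : ℝ) + 1)) /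
      (2 * (p : ℝ) * (p.factorial : ℝ) * ((p - 1).factorial : ℝ) * (2 : ℝ) ^ (2 * p - 1)) := by
    apply div_pos (div_pos hfk (by positivity))
    have : (0 : ℝ) < 2 * (p : ℝ) := by linarith
    positivity
  have hg0 : gAux p 0 < 0 := by
    rw [gAux_zero p hp]
    linarith
  refine ⟨?_, ?_, ?_⟩
  · -- part (i)
    rintro μ ⟨h1, h2⟩
    have hμ0 : 0 < μ := lt_of_le_of_lt (Real.sqrt_nonneg _) h1
    have hsq : 1 - 2 / (2 * (p : ℝ) + 1) < μ ^ 2 := (Real.sqrt_lt' hμ0).mp h1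
    have hkinv : (2 * (p : ℝ) + 1) * (2 / (2 * (p : ℝ) + 1)) = 2 := by
      field_simp
    have hkey : -2 < ((2 * p + 1 : ℕ) : ℝ) * (μ ^ 2 - 1) := by
      push_cast
      nlinarith [hsq, hp']
    have hf : fAux (2 * p + 1) μ ≤ 0 := by
      unfold fAux
      rw [hdiv2]
      apply Finset.sum_nonpos
      intro m hm
      obtain ⟨hm1, hm2⟩ := Finset.mem_Icc.mp hm
      have hm' : (1 : ℝ) ≤ (m : ℝ) := by exact_mod_cast hm1
      apply div_nonpos_of_nonpos_of_nonneg
      · apply mul_nonpos_of_nonneg_of_nonpos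
        · apply mul_nonneg
          · have hd : -1 ≤ ((2 * p + 1 : ℕ) : ℝ) * (μ ^ 2 - 1) / (2 * (m : ℝ)) := by
              rw [le_div_iff₀ (by linarith : (0:ℝ) < 2 * (m : ℝ))]
              nlinarith [hkey, hm']
            linarith
          · exact pow_nonneg hμ0.le _
        · exact Odd.pow_nonpos ⟨m - 1, by omega⟩ (by nlinarith : μ ^ 2 - 1 ≤ 0)
      · positivity
    have hT1 : μ ^ (2 * p + 1 - 1) * (μ ^ (2 * p + 1) - 1) < 0 := by
      apply mul_neg_of_pos_of_neg (pow_pos hμ0 _)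
      have := pow_lt_one₀ hμ0.le h2 (n := 2 * p + 1) (by omega)
      linarith
    have hT2 : (0 : ℝ) < (((2 * p + 1).factorial : ℕ) : ℝ) / ((2 * p + 1 : ℕ) : ℝ) * μ⁻¹ := by
      apply mul_pos (div_pos hfk (by push_cast; linarith)) (inv_pos.mpr hμ0)
    unfold Acoef
    have h3 : (((2 * p + 1).factorial : ℕ) : ℝ) / ((2 * p + 1 : ℕ) : ℝ) * μ⁻¹ *
        fAux (2 * p + 1) μ ≤ 0 := mul_nonpos_of_nonneg_of_nonpos hT2.le hf
    linarith
  · -- part (ii)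
    have hderiv : (fun μ : ℝ => gAux p μ - gAux p 0) =O[nhds 0] (fun μ : ℝ => μ) := by
      have h := (((gAux_diff p) 0).hasFDerivAt).isBigO_sub
      simpa using h
    have hO : (fun μ : ℝ => μ * (gAux p μ - gAux p 0)) =O[nhds 0] (fun μ : ℝ => μ ^ 2) := by
      have := (Asymptotics.isBigO_refl (fun μ : ℝ => μ) (nhds 0)).mul hderiv
      simpa [pow_two] using this
    refine Asymptotics.IsBigO.trans ?_ (hO.mono nhdsWithin_le_nhds)
    apply Asymptotics.IsBigO.of_bound 1
    filter_upwards [self_mem_nhdsWithin] with μ (hμ : μ ∈ Set.Ioi 0)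
    have heq : Acoef (2 * p + 1) μ +
        (((2 * p + 1).factorial : ℝ) / (2 * (p : ℝ) + 1)) * μ /
          (2 * (p : ℝ) * (p.factorial : ℝ) * ((p - 1).factorial : ℝ) * (2 : ℝ) ^ (2 * p - 1)) =
        μ * (gAux p μ - gAux p 0) := by
      rw [A_eq p hp μ (ne_of_gt hμ), gAux_zero p hp]
      ring
    rw [heq]
    simp
  · -- part (iii)
    have hc : ContinuousAt (gAux p) 0 := (gAux_diff p).continuous.continuousAt
    have hev : ∀ᶠ μ in nhds (0 : ℝ), gAux p μ < 0 :=
      hc.eventually_lt_const hg0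
    obtain ⟨ε, hε, hball⟩ := Metric.eventually_nhds_iff.mp hev
    refine ⟨ε, hε, fun μ ⟨hμ1, hμ2⟩ => ?_⟩
    have : gAux p μ < 0 := hball (by simpa [Real.dist_eq, abs_of_pos hμ1] using hμ2)
    rw [A_eq p hp μ (ne_of_gt hμ1)]
    exact mul_neg_of_pos_of_neg hμ1 this
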